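/- Let (X, d_X) be a metric space satisfying d_X(x,y) ≤ (1+ε(d_X(x,y)))·max{d_X(x,z), d_X(y,z)} + k for all x, y, z ∈ X, where k > 0 is a constant and ε: ℝ₊ → ℝ₊ is a function with ε(t) → 0 as t → ∞. Then every asymptotic cone of (X, d_X) is an ultrametric space. -/

import Mathlib

open Filter

/-- If `d_X(x,y) ≤ (1+ε(d_X(x,y)))·max{d_X(x,z),d_X(y,z)} + k` with `ε(t) → 0` as `t → ∞`,
then every asymptotic cone of `X` is ultrametric: for any nonprincipal ultrafilter `ω`,
`ω`-divergent scaling sequence `d`, sequences of points and ultralimit distances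
`Dxy, Dxz, Dyz` of the rescaled distances, one has `Dxy ≤ max Dxz Dyz`. -/
theorem cone_ultrametric_of_eps_k {X : Type*} [PseudoMetricSpace X]
    (ε : ℝ → ℝ) (hε0 : ∀ t, 0 ≤ ε t) (hε : Tendsto ε atTop (nhds 0))
    (k : ℝ) (hk : 0 < k)
    (hX : ∀ x y z : X, dist x y ≤ (1 + ε (dist x y)) * max (dist x z) (dist y z) + k)
    (ω : Ultrafilter ℕ) (hω : (ω : Filter ℕ) ≤ cofinite)
    (d : ℕ → ℝ) (hd : ∀ n, 0 < d n) (hdiv : Tendsto d (ω : Filter ℕ) atTop)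
    (x y z : ℕ → X) (Dxy Dxz Dyz : ℝ)
    (hxy : Tendsto (fun n => dist (x n) (y n) / d n) (ω : Filter ℕ) (nhds Dxy))
    (hxz : Tendsto (fun n => dist (x n) (z n) / d n) (ω : Filter ℕ) (nhds Dxz))
    (hyz : Tendsto (fun n => dist (y n) (z n) / d n) (ω : Filter ℕ) (nhds Dyz)) :
    Dxy ≤ max Dxz Dyz := by
  have hne : (ω : Filter ℕ).NeBot := ω.neBot'
  have hDxz0 : 0 ≤ Dxz := ge_of_tendsto' hxz fun n => div_nonneg dist_nonneg (hd n).le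
  rcases le_or_gt Dxy 0 with h0 | h0
  · exact h0.trans (le_max_of_le_left hDxz0)
  -- Dxy > 0 : dist (x n) (y n) → ∞ along ω
  have hdist : Tendsto (fun n => dist (x n) (y n)) (ω : Filter ℕ) atTop := by
    have : Tendsto (fun n => dist (x n) (y n) / d n * d n) (ω : Filter ℕ) atTop :=
      hxy.pos_mul_atTop h0 hdiv
    refine this.congr fun n => ?_
    field_simp [(hd n).ne']
  have hεlim : Tendsto (fun n => ε (dist (x n) (y n))) (ω : Filter ℕ) (nhds 0) :=
    hε.comp hdist
  have hklim : Tendsto (fun n => k / d n) (ω : Filter ℕ) (nhds 0) :=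
    tendsto_const_nhds.div_atTop hdiv
  have hg : Tendsto (fun n => (1 + ε (dist (x n) (y n))) *
      max (dist (x n) (z n) / d n) (dist (y n) (z n) / d n) + k / d n)
      (ω : Filter ℕ) (nhds ((1 + 0) * max Dxz Dyz + 0)) :=
    (((tendsto_const_nhds.add hεlim).mul (hxz.max hyz))).add hklim
  have key : Dxy ≤ (1 + 0) * max Dxz Dyz + 0 := by
    refine le_of_tendsto_of_tendsto' hxy hg fun n => ?_
    calc dist (x n) (y n) / d n
        ≤ ((1 + ε (dist (x n) (y n))) * max (dist (x n) (z n)) (dist (y n) (z n)) + k) / d n :=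
          div_le_div_of_nonneg_right (hX (x n) (y n) (z n)) (hd n).le
      _ = (1 + ε (dist (x n) (y n))) *
          max (dist (x n) (z n) / d n) (dist (y n) (z n) / d n) + k / d n := by
          rw [add_div, mul_div_assoc, max_div_div_right (hd n).le]
  simpa using key
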